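/- Let q = 2^(2ℓ) with ℓ ≥ 1, F_q = GaloisField 2 (2ℓ), and let x ∈ F_q satisfy x³ = 1 and x ≠ 1 (such x exists since 3 divides q − 1). Then the set B of matrices [[y, a], [0, y²]] with y ∈ {1, x, x²} and a ∈ F_q (note y² = y⁻¹ since y³ = 1) is a subgroup of SL(2,F_q) of order 3q, and B is an intersecting set with respect to the induced action on 3-element subsets of ℙ¹(F_q). -/

import Mathlib

open scoped Pointwise MatrixGroups

noncomputable section

/-- The projective line over `K`. -/
abbrev Proj (K : Type*) [Field K] := Projectivization K (Fin 2 → K)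

variable {K : Type*} [Field K]

lemma GLmulVecLin_injective (g : GL (Fin 2) K) :
    Function.Injective ((g : Matrix (Fin 2) (Fin 2) K).mulVecLin) := by
  intro u v huv
  have h := congrArg ((((g⁻¹ : GL (Fin 2) K) : Matrix (Fin 2) (Fin 2) K)).mulVecLin) huv
  simp only [Matrix.mulVecLin_apply, Matrix.mulVec_mulVec] at h
  rw [show ((g⁻¹ : GL (Fin 2) K) : Matrix (Fin 2) (Fin 2) K) * (g : Matrix (Fin 2) (Fin 2) K) = 1
    from g.inv_mul, Matrix.one_mulVec, Matrix.one_mulVec] at h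
  exact h

lemma GLmulVec_ne_zero (g : GL (Fin 2) K) {v : Fin 2 → K} (hv : v ≠ 0) :
    (g : Matrix (Fin 2) (Fin 2) K).mulVec v ≠ 0 := by
  intro h
  apply hv
  have : ((g : Matrix (Fin 2) (Fin 2) K)).mulVecLin v =
      ((g : Matrix (Fin 2) (Fin 2) K)).mulVecLin 0 := by
    simpa [Matrix.mulVecLin_apply] using h
  simpa using GLmulVecLin_injective g this

/-- The action of `GL(2,K)` on the projective line by matrix-vector multiplication on
representatives. -/
instance GLProjAction : MulAction (GL (Fin 2) K) (Proj K) where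
  smul g x := Projectivization.map ((g : Matrix (Fin 2) (Fin 2) K).mulVecLin)
    (GLmulVecLin_injective g) x
  one_smul x := by
    induction x using Projectivization.ind with
    | h v hv =>
      show Projectivization.map _ _ _ = _
      simp [Projectivization.map_mk]
  mul_smul g h x := by
    induction x using Projectivization.ind with
    | h v hv =>
      show Projectivization.map _ _ _ =
        Projectivization.map _ _ (Projectivization.map _ _ _)
      simp [Projectivization.map_mk, Matrix.mulVecLin_apply, Matrix.mulVec_mulVec,
        Units.val_mul]

lemma GL_smul_mk (g : GL (Fin 2) K) (v : Fin 2 → K) (hv : v ≠ 0) :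
    g • Projectivization.mk K v hv =
      Projectivization.mk K ((g : Matrix (Fin 2) (Fin 2) K).mulVec v)
        (GLmulVec_ne_zero g hv) := by
  show Projectivization.map _ _ _ = _
  simp [Projectivization.map_mk, Matrix.mulVecLin_apply]

/-- The action of `SL(2,K)` on the projective line. -/
instance SLProjAction : MulAction (Matrix.SpecialLinearGroup (Fin 2) K) (Proj K) :=
  MulAction.compHom _ (Matrix.SpecialLinearGroup.toGL)

end

noncomputable section
variable {K : Type*} [Field K]

lemma center_smul_eq (c : GL (Fin 2) K) (hc : c ∈ Subgroup.center (GL (Fin 2) K))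
    (x : Proj K) : c • x = x := by
  have hcomm : ∀ t : Matrix.TransvectionStruct (Fin 2) K,
      Commute t.toMatrix (c : Matrix (Fin 2) (Fin 2) K) := by
    intro t
    let u : GL (Fin 2) K := ⟨t.toMatrix, t.inv.toMatrix, t.mul_inv, t.inv_mul⟩
    have h := Subgroup.mem_center_iff.mp hc u
    have := congrArg Units.val h
    simpa [u, Commute, SemiconjBy] using this
  obtain ⟨r, hr⟩ := Matrix.mem_range_scalar_of_commute_transvectionStruct hcomm
  have hr0 : r ≠ 0 := by
    intro h0
    have hne : (![1, 0] : Fin 2 → K) ≠ 0 := by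
      intro h
      have := congrFun h 0
      simp at this
    have := GLmulVec_ne_zero c hne
    rw [← hr, h0] at this
    rw [show (0 : K) = (0 : K) from rfl] at this
    apply this
    funext i
    simp [Matrix.mulVec_diagonal]
  induction x using Projectivization.ind with
  | h v hv =>
    rw [GL_smul_mk]
    rw [Projectivization.mk_eq_mk_iff]
    refine ⟨Units.mk0 r hr0, ?_⟩
    rw [← hr]
    funext i
    simp [Matrix.mulVec_diagonal]

end

noncomputable section

/-- The projective general linear group `PGL(2,K) = GL(2,K)/Z(GL(2,K))`. -/
abbrev PGL2 (K : Type*) [Field K] : Type _ :=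
  GL (Fin 2) K ⧸ Subgroup.center (GL (Fin 2) K)

variable {K : Type*} [Field K]

/-- The action of `GL(2,K)` on the projective line descends to `PGL(2,K)`. -/
instance PGLProjSMul : SMul (PGL2 K) (Proj K) :=
  ⟨fun g x => Quotient.liftOn' g (fun a => a • x) (by
    intro a b hab
    rw [QuotientGroup.leftRel_apply] at hab
    show a • x = b • x
    have hb : b = a * (a⁻¹ * b) := by group
    rw [hb, mul_smul, center_smul_eq _ hab])⟩

instance PGLProjAction : MulAction (PGL2 K) (Proj K) where
  one_smul x := center_smul_eq 1 (Subgroup.one_mem _) x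
  mul_smul g h x := by
    induction g using Quotient.inductionOn' with
    | h a =>
      induction h using Quotient.inductionOn' with
      | h b => exact mul_smul a b x

lemma PGL2_smul_mk' (a : GL (Fin 2) K) (x : Proj K) :
    (QuotientGroup.mk a : PGL2 K) • x = a • x := rfl

/-- The natural homomorphism `SL(2,K) → PGL(2,K)`. -/
def SLtoPGL2 (K : Type*) [Field K] : Matrix.SpecialLinearGroup (Fin 2) K →* PGL2 K :=
  (QuotientGroup.mk' (Subgroup.center (GL (Fin 2) K))).comp Matrix.SpecialLinearGroup.toGL

/-- `PSL(2,K)`, realized as the image of `SL(2,K)` in `PGL(2,K)`. -/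
def PSL2 (K : Type*) [Field K] : Subgroup (PGL2 K) := (SLtoPGL2 K).range

/-- A subset `F` of a group `G` acting on the projective line over `K` is *intersecting for the
action on `k`-element subsets* if any two of its elements agree on some `k`-element subset of
the projective line. -/
def IntersectingOnSubsets (G : Type*) [Group G] (K : Type*) [Field K]
    [MulAction G (Proj K)] (k : ℕ) (F : Set G) : Prop :=
  ∀ g ∈ F, ∀ h ∈ F, ∃ S : Set (Proj K), S.ncard = k ∧ g • S = h • S

end


noncomputable section
variable {K : Type*} [Field K]

abbrev SL2 (K : Type*) [Field K] := Matrix.SpecialLinearGroup (Fin 2) K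

lemma SL_smul_mk (M : SL2 K) (v : Fin 2 → K) (hv : v ≠ 0) :
    M • Projectivization.mk K v hv =
      Projectivization.mk K ((M : Matrix (Fin 2) (Fin 2) K).mulVec v)
        (GLmulVec_ne_zero M.toGL hv) :=
  GL_smul_mk M.toGL v hv

def pt (z : K) : Proj K := Projectivization.mk K ![z, 1] (by
  intro h; have := congrFun h 1; simp at this)

def inf (K : Type*) [Field K] : Proj K := Projectivization.mk K ![1, 0] (by
  intro h; have := congrFun h 0; simp at this)

lemma pt_injective : Function.Injective (pt (K := K)) := by
  intro z w h
  rw [pt, pt, Projectivization.mk_eq_mk_iff'] at h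
  obtain ⟨c, hc⟩ := h
  have h1 := congrFun hc 1
  have h0 := congrFun hc 0
  simp [Matrix.smul_cons] at h1 h0
  rw [h1] at h0
  simpa using h0.symm

lemma pt_ne_inf (z : K) : pt z ≠ inf K := by
  rw [pt, inf, Ne, Projectivization.mk_eq_mk_iff']
  rintro ⟨c, hc⟩
  have h1 := congrFun hc 1
  simp [Matrix.smul_cons] at h1

lemma smul_inf (M : SL2 K) {y a : K} (hy3 : y ^ 3 = 1)
    (hM : (M : Matrix (Fin 2) (Fin 2) K) = !![y, a; 0, y ^ 2]) :
    M • inf K = inf K := by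
  have hy0 : y ≠ 0 := by rintro rfl; simp at hy3
  rw [inf, SL_smul_mk]
  refine (Projectivization.mk_eq_mk_iff' _ _ _ _ _).mpr ?_
  refine ⟨y, ?_⟩
  funext i
  fin_cases i
  · simp [hM, Matrix.mulVec, dotProduct, Fin.sum_univ_two]
  · simp [hM, Matrix.mulVec, dotProduct, Fin.sum_univ_two]

lemma smul_pt (M : SL2 K) {y a : K} (hy3 : y ^ 3 = 1)
    (hM : (M : Matrix (Fin 2) (Fin 2) K) = !![y, a; 0, y ^ 2]) (z : K) :
    M • pt z = pt (y ^ 2 * z + a * y) := by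
  rw [pt, pt, SL_smul_mk]
  refine (Projectivization.mk_eq_mk_iff' _ _ _ _ _).mpr ?_
  refine ⟨y ^ 2, ?_⟩
  funext i
  fin_cases i
  · simp [hM, Matrix.mulVec, dotProduct, Fin.sum_univ_two]
    linear_combination (z * y + a) * hy3
  · simp [hM, Matrix.mulVec, dotProduct, Fin.sum_univ_two]

end

noncomputable section
variable {K : Type*} [Field K]

lemma exists_stable_triple [CharP K 2] (M : SL2 K) {y a : K} (hy3 : y ^ 3 = 1)
    (hM : (M : Matrix (Fin 2) (Fin 2) K) = !![y, a; 0, y ^ 2]) :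
    ∃ S : Set (Proj K), S.ncard = 3 ∧ M • S = S := by
  have hy0 : y ≠ 0 := by rintro rfl; simp at hy3
  by_cases hy1 : y = 1
  · subst hy1
    by_cases ha : a = 0
    · subst ha
      refine ⟨{inf K, pt 0, pt 1}, ?_, ?_⟩
      · exact Set.ncard_eq_three.mpr ⟨_, _, _, (pt_ne_inf 0).symm, (pt_ne_inf 1).symm,
          fun h => zero_ne_one (pt_injective h), rfl⟩
      · have hM1 : M = 1 := by
          ext i j
          rw [hM]
          fin_cases i <;> fin_cases j <;> simp [Matrix.one_fin_two]
        rw [hM1, one_smul]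
    · refine ⟨{inf K, pt 0, pt a}, ?_, ?_⟩
      · exact Set.ncard_eq_three.mpr ⟨_, _, _, (pt_ne_inf 0).symm, (pt_ne_inf a).symm,
          fun h => ha (pt_injective h).symm, rfl⟩
      · have h1 : M • inf K = inf K := smul_inf M hy3 hM
        have h2 : M • pt 0 = pt a := by
          rw [smul_pt M hy3 hM]; ring_nf
        have h3 : M • pt a = pt 0 := by
          rw [smul_pt M hy3 hM]
          have : (1:K) ^ 2 * a + a * 1 = 0 := by
            have := CharTwo.add_self_eq_zero (R := K) a
            linear_combination this
          rw [this]
        rw [Set.smul_set_insert, Set.smul_set_insert, Set.smul_set_singleton, h1, h2, h3]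
        ext p; simp; tauto
  · -- y ≠ 1
    have hsum : y ^ 2 + y + 1 = 0 := by
      have h : (y - 1) * (y ^ 2 + y + 1) = 0 := by linear_combination hy3
      rcases mul_eq_zero.mp h with h' | h'
      · exact absurd (by linear_combination h') hy1
      · exact h'
    have hy2 : y ^ 2 - 1 ≠ 0 := by
      intro h
      apply hy1
      calc y = y * y ^ 2 := by linear_combination (-y) * h
        _ = 1 := by linear_combination hy3
    set f : K → K := fun z => y ^ 2 * z + a * y with hf
    set z0 : K := a * y / (1 - y ^ 2) with hz0
    have hfix : ∀ z, f z = z → z = z0 := by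
      intro z hz
      rw [hf] at hz
      have h1y : (1 : K) - y ^ 2 ≠ 0 := fun h => hy2 (by linear_combination -h)
      rw [hz0, eq_div_iff h1y]
      linear_combination -hz
    have hz0fix : f z0 = z0 := by
      rw [hf, hz0]
      have h1y : (1 : K) - y ^ 2 ≠ 0 := fun h => hy2 (by linear_combination -h)
      field_simp
      ring
    have finj : Function.Injective f := by
      intro u v huv
      rw [hf] at huv
      have hy20 : y ^ 2 ≠ 0 := pow_ne_zero 2 hy0
      exact mul_left_cancel₀ hy20 (by linear_combination huv)
    set z1 : K := z0 + 1 with hz1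
    have hz1ne : z1 ≠ z0 := by
      rw [hz1]; intro h; exact one_ne_zero (by linear_combination h)
    have fcube : ∀ z, f (f (f z)) = z := by
      intro z
      rw [hf]
      show y ^ 2 * (y ^ 2 * (y ^ 2 * z + a * y) + a * y) + a * y = z
      linear_combination ((y ^ 3 + 1) * z + a * y ^ 2) * hy3 + a * y * hsum
    have d1 : f z1 ≠ z1 := fun h => hz1ne (hfix _ h)
    have hfz1ne : f z1 ≠ z0 := by
      intro h
      exact hz1ne (finj (h.trans hz0fix.symm))
    have d2 : f (f z1) ≠ f z1 := fun h => hfz1ne (hfix _ h)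
    have d3 : f (f z1) ≠ z1 := by
      intro h
      apply d1
      have := congrArg f h
      rw [fcube] at this
      exact this.symm
    refine ⟨{pt z1, pt (f z1), pt (f (f z1))}, ?_, ?_⟩
    · exact Set.ncard_eq_three.mpr ⟨_, _, _,
        fun h => d1 (pt_injective h).symm,
        fun h => d3 (pt_injective h).symm,
        fun h => d2 (pt_injective h).symm, rfl⟩
    · have h1 : M • pt z1 = pt (f z1) := smul_pt M hy3 hM z1
      have h2 : M • pt (f z1) = pt (f (f z1)) := smul_pt M hy3 hM (f z1)
      have h3 : M • pt (f (f z1)) = pt z1 := by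
        rw [smul_pt M hy3 hM]
        exact congrArg pt (fcube z1)
      rw [Set.smul_set_insert, Set.smul_set_insert, Set.smul_set_singleton, h1, h2, h3]
      ext p; simp; tauto

end

/-- For `q = 2^(2ℓ)` and `x` a primitive cube root of unity in `F_q`, the
matrices `[[y, a], [0, y²]]` with `y ∈ {1, x, x²}` and `a ∈ F_q` form a subgroup of `SL(2, F_q)`
of order `3q` which is intersecting for the action on 3-element subsets of the projective
line. -/
theorem borel_subgroup_intersecting_three_subsets (l : ℕ) (hl : 1 ≤ l)
    (x : GaloisField 2 (2 * l)) (hx3 : x ^ 3 = 1) (hx1 : x ≠ 1) :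
    ∃ B : Subgroup (Matrix.SpecialLinearGroup (Fin 2) (GaloisField 2 (2 * l))),
      (B : Set (Matrix.SpecialLinearGroup (Fin 2) (GaloisField 2 (2 * l)))) =
        {M : Matrix.SpecialLinearGroup (Fin 2) (GaloisField 2 (2 * l)) | ∃ y a : GaloisField 2 (2 * l), (y = 1 ∨ y = x ∨ y = x ^ 2) ∧
          (M : Matrix (Fin 2) (Fin 2) (GaloisField 2 (2 * l))) = !![y, a; 0, y ^ 2]} ∧
      Nat.card B = 3 * 2 ^ (2 * l) ∧
      IntersectingOnSubsets _ (GaloisField 2 (2 * l)) 3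
        (B : Set (Matrix.SpecialLinearGroup (Fin 2) (GaloisField 2 (2 * l)))) := by
  have hx0 : x ≠ 0 := by rintro rfl; simp at hx3
  have hx21 : x ^ 2 ≠ 1 := by
    intro h
    apply hx1
    calc x = x * x ^ 2 := by linear_combination (-x) * h
      _ = 1 := by linear_combination hx3
  have hx2x : x ^ 2 ≠ x := by
    intro h
    apply hx1
    have := mul_left_cancel₀ hx0 (show x * x = x * 1 by linear_combination h)
    simpa using this
  have cube : ∀ y : GaloisField 2 (2 * l), (y = 1 ∨ y = x ∨ y = x ^ 2) → y ^ 3 = 1 := by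
    rintro y (rfl | rfl | rfl)
    · norm_num
    · exact hx3
    · linear_combination (x ^ 3 + 1) * hx3
  refine ⟨{
    carrier := {M : Matrix.SpecialLinearGroup (Fin 2) (GaloisField 2 (2 * l)) |
      ∃ y a : GaloisField 2 (2 * l),
      (y = 1 ∨ y = x ∨ y = x ^ 2) ∧
      (M : Matrix (Fin 2) (Fin 2) (GaloisField 2 (2 * l))) = !![y, a; 0, y ^ 2]}
    mul_mem' := ?_
    one_mem' := ?_
    inv_mem' := ?_ }, rfl, ?_, ?_⟩
  · rintro M N ⟨y, a, hy, hM⟩ ⟨y', a', hy', hN⟩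
    refine ⟨y * y', y * a' + a * y' ^ 2, ?_, ?_⟩
    · rcases hy with rfl | rfl | rfl <;> rcases hy' with rfl | rfl | rfl <;>
        first
          | (left; ring1)
          | (right; left; ring1)
          | (right; right; ring1)
          | (left; linear_combination hx3)
          | (right; left; linear_combination x * hx3)
    · ext i j
      rw [Matrix.SpecialLinearGroup.coe_mul, hM, hN]
      fin_cases i <;> fin_cases j <;>
        simp [Matrix.mul_apply, Fin.sum_univ_two] <;> ring
  · refine ⟨1, 0, Or.inl rfl, ?_⟩
    rw [Matrix.SpecialLinearGroup.coe_one, Matrix.one_fin_two]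
    norm_num
  · rintro M ⟨y, a, hy, hM⟩
    have hy3 : y ^ 3 = 1 := cube y hy
    refine ⟨y ^ 2, -a, ?_, ?_⟩
    · rcases hy with rfl | rfl | rfl
      · left; norm_num
      · right; right; rfl
      · right; left; linear_combination x * hx3
    · ext i j
      rw [Matrix.SpecialLinearGroup.coe_inv, hM, Matrix.adjugate_fin_two]
      fin_cases i <;> fin_cases j <;> simp
      linear_combination (-y) * hy3
  · -- cardinality
    have hcardK : Nat.card (GaloisField 2 (2 * l)) = 2 ^ (2 * l) :=
      GaloisField.card 2 (2 * l) (by omega)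
    show Nat.card ({M : Matrix.SpecialLinearGroup (Fin 2) (GaloisField 2 (2 * l)) |
      ∃ y a : GaloisField 2 (2 * l),
      (y = 1 ∨ y = x ∨ y = x ^ 2) ∧
      (M : Matrix (Fin 2) (Fin 2) (GaloisField 2 (2 * l))) = !![y, a; 0, y ^ 2]} : Set _)
      = 3 * 2 ^ (2 * l)
    have hdet : ∀ y a : GaloisField 2 (2 * l), (y = 1 ∨ y = x ∨ y = x ^ 2) →
        Matrix.det !![y, a; 0, y ^ 2] = 1 := by
      intro y a hy
      rw [Matrix.det_fin_two_of]
      linear_combination cube y hy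
    let g : ({1, x, x ^ 2} : Set (GaloisField 2 (2 * l))) × GaloisField 2 (2 * l) →
        ({M : Matrix.SpecialLinearGroup (Fin 2) (GaloisField 2 (2 * l)) |
          ∃ y a : GaloisField 2 (2 * l),
          (y = 1 ∨ y = x ∨ y = x ^ 2) ∧
          (M : Matrix (Fin 2) (Fin 2) (GaloisField 2 (2 * l))) = !![y, a; 0, y ^ 2]} : Set _) :=
      fun p =>
      ⟨⟨!![p.1.1, p.2; 0, p.1.1 ^ 2], hdet p.1.1 p.2 (by
          have := p.1.2
          simp only [Set.mem_insert_iff, Set.mem_singleton_iff] at this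
          exact this)⟩,
        ⟨p.1.1, p.2, by
          have := p.1.2
          simp only [Set.mem_insert_iff, Set.mem_singleton_iff] at this
          exact this, rfl⟩⟩
    have hbij : Function.Bijective g := by
      constructor
      · intro p q h
        have hm : (!![p.1.1, p.2; 0, p.1.1 ^ 2] : Matrix (Fin 2) (Fin 2) (GaloisField 2 (2 * l))) =
            !![q.1.1, q.2; 0, q.1.1 ^ 2] := congrArg (fun M => ((M : _).1 :
              Matrix (Fin 2) (Fin 2) (GaloisField 2 (2 * l)))) h
        have h00 : p.1.1 = q.1.1 := by
          have := congrArg (fun A : Matrix (Fin 2) (Fin 2) (GaloisField 2 (2 * l)) => A 0 0) hm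
          simpa using this
        have h01 : p.2 = q.2 := by
          have := congrArg (fun A : Matrix (Fin 2) (Fin 2) (GaloisField 2 (2 * l)) => A 0 1) hm
          simpa using this
        exact Prod.ext (Subtype.ext h00) h01
      · rintro ⟨M, y, a, hy, hM⟩
        refine ⟨⟨⟨y, ?_⟩, a⟩, Subtype.ext (Subtype.ext hM.symm)⟩
        simp only [Set.mem_insert_iff, Set.mem_singleton_iff]
        exact hy
    rw [← Nat.card_eq_of_bijective g hbij, Nat.card_prod, hcardK,
      Nat.card_coe_set_eq]
    have h3 : ({1, x, x ^ 2} : Set (GaloisField 2 (2 * l))).ncard = 3 :=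
      Set.ncard_eq_three.mpr ⟨1, x, x ^ 2, fun h => hx1 h.symm, fun h => hx21 h.symm,
        fun h => hx2x h.symm, rfl⟩
    rw [h3]
  · -- intersecting
    intro g hg h hh
    obtain ⟨y, a, hy, hM⟩ := mul_mem (inv_mem hh) hg
    obtain ⟨S, hS3, hSfix⟩ := exists_stable_triple (h⁻¹ * g) (cube y hy) hM
    refine ⟨S, hS3, ?_⟩
    have hgoal := congrArg (fun TT : Set (Proj (GaloisField 2 (2 * l))) => h • TT) hSfix
    simpa [smul_smul, mul_inv_cancel_left] using hgoal
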